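/- arXiv:0711.2974 — 2 statements merged into one kernel-verified Lean document; each statement's English description precedes it below -/
import Mathlib

section
/- Let k be an algebraically closed field of characteristic 0. Let f ∈ k[x][y] be a polynomial of degree m ≥ 1 in the variable y, with coefficients a_0(x), …, a_m(x) ∈ k[x], and assume the leading coefficient satisfies a_m(0) ≠ 0 (equivalently, the one-variable polynomial f(0,y) has degree exactly m). Then there exist a positive integer N and power series y_1, …, y_m ∈ k[[u]] such that, in the polynomial ring (k[[u]])[y], one has the factorization f(u^N, y) = a_m(u^N) · ∏_{i=1}^m (y − y_i(u)). (This is the statement that the m Newton–Puiseux expansions of the roots of f along x = 0 all lie in the ring of fractional power series k[[x^{1/N}]] for some integer N.) -/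
namespace NP

variable {k : Type*} [CommRing k]

/-- The substitution `u ↦ u^N` on power series, as a function. -/
noncomputable def expandFun (N : ℕ) (f : PowerSeries k) : PowerSeries k :=
  PowerSeries.mk fun n => if N ∣ n then PowerSeries.coeff (R := k) (n / N) f else 0

lemma coeff_expandFun (N : ℕ) (f : PowerSeries k) (n : ℕ) :
    PowerSeries.coeff (R := k) n (expandFun N f) =
      if N ∣ n then PowerSeries.coeff (R := k) (n / N) f else 0 := by
  simp [expandFun]

lemma coeff_expandFun_mul (N : ℕ) (hN : 0 < N) (f : PowerSeries k) (d : ℕ) :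
    PowerSeries.coeff (R := k) (N * d) (expandFun N f) = PowerSeries.coeff (R := k) d f := by
  rw [coeff_expandFun, if_pos ⟨d, rfl⟩, Nat.mul_div_cancel_left _ hN]

lemma coeff_expandFun_of_not_dvd {N n : ℕ} (h : ¬ N ∣ n) (f : PowerSeries k) :
    PowerSeries.coeff (R := k) n (expandFun N f) = 0 := by
  rw [coeff_expandFun, if_neg h]

lemma expandFun_zero (f : PowerSeries k) :
    expandFun 0 f = PowerSeries.C (R := k) (PowerSeries.coeff (R := k) 0 f) := by
  ext n
  rw [coeff_expandFun, PowerSeries.coeff_C]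
  rcases Nat.eq_zero_or_pos n with rfl | hn
  · simp
  · rw [if_neg (by omega), if_neg (by omega)]

lemma expandFun_mul (N : ℕ) (f g : PowerSeries k) :
    expandFun N (f * g) = expandFun N f * expandFun N g := by
  rcases Nat.eq_zero_or_pos N with rfl | hN
  · rw [expandFun_zero, expandFun_zero, expandFun_zero, ← map_mul]
    congr 1
    simp [PowerSeries.coeff_zero_eq_constantCoeff_apply]
  ext n
  by_cases hdvd : N ∣ n
  · obtain ⟨d, rfl⟩ := hdvd
    rw [coeff_expandFun_mul N hN, PowerSeries.coeff_mul, PowerSeries.coeff_mul]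
    have hemb : Function.Injective (fun p : ℕ × ℕ => (N * p.1, N * p.2)) := by
      rintro ⟨a, b⟩ ⟨c, d⟩ h
      simp only [Prod.mk.injEq] at h
      obtain ⟨h1, h2⟩ := h
      exact Prod.ext (Nat.eq_of_mul_eq_mul_left hN h1) (Nat.eq_of_mul_eq_mul_left hN h2)
    have hsub : (Finset.HasAntidiagonal.antidiagonal d).map ⟨_, hemb⟩ ⊆ Finset.HasAntidiagonal.antidiagonal (N * d) := by
      intro p hp
      rw [Finset.mem_map] at hp
      obtain ⟨⟨i, j⟩, hij, rfl⟩ := hp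
      rw [Finset.HasAntidiagonal.mem_antidiagonal] at hij ⊢
      show N * i + N * j = N * d
      rw [← Nat.mul_add, hij]
    rw [← Finset.sum_subset hsub ?_]
    · rw [Finset.sum_map]
      refine Finset.sum_congr rfl ?_
      rintro ⟨i, j⟩ _
      show PowerSeries.coeff (R := k) i f * PowerSeries.coeff (R := k) j g =
        PowerSeries.coeff (R := k) (N * i) (expandFun N f) *
          PowerSeries.coeff (R := k) (N * j) (expandFun N g)
      rw [coeff_expandFun_mul N hN, coeff_expandFun_mul N hN]
    · rintro ⟨i, j⟩ hij hnotmem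
      rw [Finset.HasAntidiagonal.mem_antidiagonal] at hij
      by_cases hi : N ∣ i
      · by_cases hj : N ∣ j
        · exfalso
          apply hnotmem
          obtain ⟨i', rfl⟩ := hi
          obtain ⟨j', rfl⟩ := hj
          rw [Finset.mem_map]
          refine ⟨(i', j'), ?_, rfl⟩
          rw [Finset.HasAntidiagonal.mem_antidiagonal]
          rw [← Nat.mul_add] at hij
          exact Nat.eq_of_mul_eq_mul_left hN hij
        · rw [coeff_expandFun_of_not_dvd hj, mul_zero]
      · rw [coeff_expandFun_of_not_dvd hi, zero_mul]
  · rw [coeff_expandFun_of_not_dvd hdvd, PowerSeries.coeff_mul]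
    refine (Finset.sum_eq_zero ?_).symm
    rintro ⟨i, j⟩ hij
    rw [Finset.HasAntidiagonal.mem_antidiagonal] at hij
    by_cases hi : N ∣ i
    · have hj : ¬ N ∣ j := fun hj => hdvd (hij ▸ Nat.dvd_add hi hj)
      rw [coeff_expandFun_of_not_dvd hj, mul_zero]
    · rw [coeff_expandFun_of_not_dvd hi, zero_mul]

/-- The substitution `u ↦ u^N` on power series, as a ring homomorphism. -/
noncomputable def expand (N : ℕ) : PowerSeries k →+* PowerSeries k where
  toFun := expandFun N
  map_one' := by
    ext n
    show PowerSeries.coeff (R := k) n (expandFun N 1) = PowerSeries.coeff (R := k) n 1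
    rw [coeff_expandFun]
    rcases Nat.eq_zero_or_pos n with rfl | hn
    · simp
    · by_cases h : N ∣ n
      · rw [if_pos h]
        rcases Nat.eq_zero_or_pos N with rfl | hN
        · obtain rfl : n = 0 := Nat.eq_zero_of_zero_dvd h
          simp
        · have : 0 < n / N := Nat.div_pos (Nat.le_of_dvd hn h) hN
          rw [PowerSeries.coeff_one, PowerSeries.coeff_one, if_neg (by omega),
            if_neg (by omega)]
      · rw [if_neg h, PowerSeries.coeff_one, if_neg (by omega)]
  map_mul' := expandFun_mul N
  map_zero' := by
    ext n
    show PowerSeries.coeff (R := k) n (expandFun N 0) = PowerSeries.coeff (R := k) n 0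
    rw [coeff_expandFun]
    simp
  map_add' := by
    intro f g
    ext n
    show PowerSeries.coeff (R := k) n (expandFun N (f + g)) =
      PowerSeries.coeff (R := k) n (expandFun N f + expandFun N g)
    rw [map_add, coeff_expandFun, coeff_expandFun, coeff_expandFun, map_add]
    by_cases h : N ∣ n <;> simp [h]

lemma coeff_expand (N : ℕ) (f : PowerSeries k) (n : ℕ) :
    PowerSeries.coeff (R := k) n (expand N f) =
      if N ∣ n then PowerSeries.coeff (R := k) (n / N) f else 0 :=
  coeff_expandFun N f n

lemma coeff_expand_mul (N : ℕ) (hN : 0 < N) (f : PowerSeries k) (d : ℕ) :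
    PowerSeries.coeff (R := k) (N * d) (expand N f) = PowerSeries.coeff (R := k) d f :=
  coeff_expandFun_mul N hN f d

lemma coeff_expand_of_not_dvd {N n : ℕ} (h : ¬ N ∣ n) (f : PowerSeries k) :
    PowerSeries.coeff (R := k) n (expand N f) = 0 :=
  coeff_expandFun_of_not_dvd h f

lemma expand_C (N : ℕ) (a : k) : expand N (PowerSeries.C (R := k) a) = PowerSeries.C (R := k) a := by
  ext n
  rw [coeff_expand]
  by_cases h : N ∣ n
  · rw [if_pos h]
    rcases Nat.eq_zero_or_pos n with rfl | hn
    · simp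
    · rcases Nat.eq_zero_or_pos N with rfl | hN
      · obtain rfl : n = 0 := Nat.eq_zero_of_zero_dvd h
        simp
      · have : 0 < n / N := Nat.div_pos (Nat.le_of_dvd hn h) hN
        rw [PowerSeries.coeff_C, PowerSeries.coeff_C, if_neg (by omega), if_neg (by omega)]
  · rw [if_neg h, PowerSeries.coeff_C, if_neg ?_]
    rintro rfl
    exact h (Nat.dvd_zero N)

lemma constantCoeff_expand (N : ℕ) (f : PowerSeries k) :
    PowerSeries.constantCoeff (R := k) (expand N f) = PowerSeries.constantCoeff (R := k) f := by
  rw [← PowerSeries.coeff_zero_eq_constantCoeff_apply,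
    ← PowerSeries.coeff_zero_eq_constantCoeff_apply,
    coeff_expand, if_pos (Nat.dvd_zero N), Nat.zero_div]

lemma expand_X (N : ℕ) (hN : 0 < N) :
    expand N (PowerSeries.X : PowerSeries k) = PowerSeries.X ^ N := by
  ext n
  rw [coeff_expand, PowerSeries.coeff_X_pow]
  by_cases h : N ∣ n
  · rw [if_pos h]
    obtain ⟨d, rfl⟩ := h
    rw [Nat.mul_div_cancel_left _ hN, PowerSeries.coeff_X]
    by_cases hd : d = 1
    · subst hd; rw [if_pos rfl, if_pos (by ring)]
    · rw [if_neg hd, if_neg (fun hc => hd (Nat.eq_of_mul_eq_mul_left hN (by omega)))]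
  · rw [if_neg h, if_neg (fun hc => h (by rw [hc]))]

lemma expand_X_pow (N j : ℕ) (hN : 0 < N) :
    expand N ((PowerSeries.X : PowerSeries k) ^ j) = PowerSeries.X ^ (N * j) := by
  rw [map_pow, expand_X N hN, ← pow_mul]

lemma expand_zero_apply (f : PowerSeries k) :
    expand 0 f = PowerSeries.C (R := k) (PowerSeries.coeff (R := k) 0 f) := expandFun_zero f

lemma expand_expand (M N : ℕ) (hM : 0 < M) (f : PowerSeries k) :
    expand M (expand N f) = expand (N * M) f := by
  rcases Nat.eq_zero_or_pos N with rfl | hN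
  · rw [expand_zero_apply, expand_C, Nat.zero_mul, expand_zero_apply]
  ext n
  rw [coeff_expand M, coeff_expand (N * M)]
  by_cases hMn : M ∣ n
  · obtain ⟨d, rfl⟩ := hMn
    rw [if_pos ⟨d, rfl⟩, Nat.mul_div_cancel_left _ hM, coeff_expand]
    by_cases hNd : N ∣ d
    · obtain ⟨e, rfl⟩ := hNd
      rw [if_pos ⟨e, rfl⟩, Nat.mul_div_cancel_left _ hN, if_pos ⟨e, by ring⟩]
      congr 1
      have : M * (N * e) = N * M * e := by ring
      rw [this, Nat.mul_div_cancel_left _ (by positivity)]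
    · rw [if_neg hNd, if_neg ?_]
      rintro ⟨e, he⟩
      exact hNd ⟨e, Nat.eq_of_mul_eq_mul_left hM (by rw [he]; ring)⟩
  · rw [if_neg hMn, if_neg ?_]
    rintro ⟨e, rfl⟩
    exact hMn ⟨N * e, by ring⟩

lemma expand_one_apply (f : PowerSeries k) : expand 1 f = f := by
  ext n
  rw [coeff_expand, if_pos (one_dvd n), Nat.div_one]

end NP
namespace NP

section Weier

variable {k : Type*} [Field k]

/-- coefficient of an explicit sum of monomials -/
lemma coeff_sum_C_mul_X_pow {S : Type*} [CommRing S] (M : ℕ) (c : ℕ → S) (i : ℕ) :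
    (∑ j ∈ Finset.range M, Polynomial.C (c j) * Polynomial.X ^ j).coeff i
      = if i < M then c i else 0 := by
  rw [Polynomial.finset_sum_coeff]
  by_cases hi : i < M
  · rw [if_pos hi, Finset.sum_eq_single i]
    · rw [Polynomial.coeff_C_mul, Polynomial.coeff_X_pow, if_pos rfl, mul_one]
    · intro j _ hj
      rw [Polynomial.coeff_C_mul, Polynomial.coeff_X_pow, if_neg (fun h => hj h.symm),
        mul_zero]
    · intro hmem
      exact absurd (Finset.mem_range.mpr hi) hmem
  · rw [if_neg hi]
    refine Finset.sum_eq_zero fun j hj => ?_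
    rw [Finset.mem_range] at hj
    rw [Polynomial.coeff_C_mul, Polynomial.coeff_X_pow, if_neg (by omega), mul_zero]

lemma liftdown (q : Polynomial k) :
    (q.map (PowerSeries.C (R := k))).map (PowerSeries.constantCoeff (R := k)) = q := by
  rw [Polynomial.map_map]
  have : (PowerSeries.constantCoeff (R := k)).comp (PowerSeries.C (R := k)) = RingHom.id k :=
    RingHom.ext fun a => PowerSeries.constantCoeff_C a
  rw [this, Polynomial.map_id]

lemma ps_eq_zero_of_forall_X_pow_dvd (r : PowerSeries k)
    (hr : ∀ n : ℕ, (PowerSeries.X : PowerSeries k) ^ n ∣ r) : r = 0 := by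
  ext i
  rw [map_zero]
  exact PowerSeries.X_pow_dvd_iff.mp (hr (i + 1)) i (Nat.lt_succ_self i)

lemma dvd_coeff_mul {x : PowerSeries k} {A B : Polynomial (PowerSeries k)}
    (hA : ∀ j, x ∣ A.coeff j) (j : ℕ) : x ∣ (A * B).coeff j := by
  rw [Polynomial.coeff_mul]
  exact Finset.dvd_sum fun p _ => (hA p.1).mul_right _

/-- Bezout correction terms. -/
noncomputable def corrP (μ : ℕ) (b D : Polynomial k) : Polynomial k :=
  (D * b) %ₘ (Polynomial.X ^ μ)

noncomputable def corrE (μ : ℕ) (a b v D : Polynomial k) : Polynomial k :=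
  D * a + ((D * b) /ₘ (Polynomial.X ^ μ)) * v

lemma corr_eq (μ : ℕ) (a b v D : Polynomial k)
    (hbez : a * Polynomial.X ^ μ + b * v = 1) :
    corrP μ b D * v + corrE μ a b v D * Polynomial.X ^ μ = D := by
  have h1 := Polynomial.modByMonic_add_div (D * b) (Polynomial.X ^ μ : Polynomial k)
  calc corrP μ b D * v + corrE μ a b v D * Polynomial.X ^ μ
      = ((D * b) %ₘ (Polynomial.X ^ μ) + Polynomial.X ^ μ * ((D * b) /ₘ (Polynomial.X ^ μ)))
          * v + D * (a * Polynomial.X ^ μ) := by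
        unfold corrP corrE; ring
    _ = D * (a * Polynomial.X ^ μ + b * v) := by rw [h1]; ring
    _ = D := by rw [hbez, mul_one]

lemma corrP_degree_lt (μ : ℕ) (b D : Polynomial k) :
    (corrP μ b D).degree < (μ : WithBot ℕ) := by
  have := Polynomial.degree_modByMonic_lt (D * b) (Polynomial.monic_X_pow (R := k) μ)
  rwa [Polynomial.degree_X_pow] at this

/-- The residue discrepancy polynomial. -/
noncomputable def Dres (h : Polynomial (PowerSeries k)) (m n : ℕ)
    (P E : Polynomial (PowerSeries k)) : Polynomial k :=
  ∑ j ∈ Finset.range m,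
    Polynomial.C (PowerSeries.coeff (R := k) n ((h - P * E).coeff j)) * Polynomial.X ^ j

lemma coeff_Dres (h : Polynomial (PowerSeries k)) (m n : ℕ)
    (P E : Polynomial (PowerSeries k)) (j : ℕ) :
    (Dres h m n P E).coeff j
      = if j < m then PowerSeries.coeff (R := k) n ((h - P * E).coeff j) else 0 :=
  coeff_sum_C_mul_X_pow m _ j

lemma Dres_degree_lt (h : Polynomial (PowerSeries k)) (m n : ℕ) (hm : 1 ≤ m)
    (P E : Polynomial (PowerSeries k)) :
    (Dres h m n P E).degree < (m : WithBot ℕ) := by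
  rw [Polynomial.degree_lt_iff_coeff_zero]
  intro i hi
  rw [coeff_Dres, if_neg (by exact_mod_cast not_lt.mpr (by exact_mod_cast hi))]

/-- The approximation sequence for the Weierstrass-type factorization. -/
noncomputable def wseq (h : Polynomial (PowerSeries k)) (m μ : ℕ) (a b v : Polynomial k) :
    ℕ → Polynomial (PowerSeries k) × Polynomial (PowerSeries k)
  | 0 => (Polynomial.X ^ μ, v.map (PowerSeries.C (R := k)))
  | n + 1 =>
    let P := (wseq h m μ a b v n).1
    let E := (wseq h m μ a b v n).2
    let D := Dres h m (n + 1) P E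
    (P + Polynomial.C ((PowerSeries.X : PowerSeries k) ^ (n + 1))
        * (corrP μ b D).map (PowerSeries.C (R := k)),
     E + Polynomial.C ((PowerSeries.X : PowerSeries k) ^ (n + 1))
        * (corrE μ a b v D).map (PowerSeries.C (R := k)))

lemma wseq_succ (h : Polynomial (PowerSeries k)) (m μ : ℕ) (a b v : Polynomial k) (n : ℕ) :
    wseq h m μ a b v (n + 1) =
      ((wseq h m μ a b v n).1 + Polynomial.C ((PowerSeries.X : PowerSeries k) ^ (n + 1))
        * (corrP μ b (Dres h m (n + 1) (wseq h m μ a b v n).1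
            (wseq h m μ a b v n).2)).map (PowerSeries.C (R := k)),
       (wseq h m μ a b v n).2 + Polynomial.C ((PowerSeries.X : PowerSeries k) ^ (n + 1))
        * (corrE μ a b v (Dres h m (n + 1) (wseq h m μ a b v n).1
            (wseq h m μ a b v n).2)).map (PowerSeries.C (R := k))) := by
  rw [wseq]

/-- The invariant maintained along the approximation. -/
def WGood (h : Polynomial (PowerSeries k)) (m μ : ℕ) (v : Polynomial k) (n : ℕ)
    (P E : Polynomial (PowerSeries k)) : Prop :=
  P.Monic ∧ P.natDegree = μ ∧ E.Monic ∧ E.natDegree = m - μ ∧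
  P.map (PowerSeries.constantCoeff (R := k)) = Polynomial.X ^ μ ∧
  E.map (PowerSeries.constantCoeff (R := k)) = v ∧
  ∀ j, (PowerSeries.X : PowerSeries k) ^ (n + 1) ∣ (h - P * E).coeff j

section Step

variable {h : Polynomial (PowerSeries k)} {m μ : ℕ} {a b v : Polynomial k}
variable (hmonic : h.Monic) (hdeg : h.natDegree = m) (hμ1 : 1 ≤ μ) (hμm : μ < m)
variable (hvmonic : v.Monic) (hvdeg : v.natDegree = m - μ)
variable (hbez : a * Polynomial.X ^ μ + b * v = 1)

include hmonic hdeg hμm in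
lemma coeff_sub_eq_zero_of_ge {P E : Polynomial (PowerSeries k)}
    (hP : P.Monic) (hPd : P.natDegree = μ) (hE : E.Monic) (hEd : E.natDegree = m - μ)
    {j : ℕ} (hj : m ≤ j) : (h - P * E).coeff j = 0 := by
  have hPE : (P * E).Monic := hP.mul hE
  have hPEd : (P * E).natDegree = m := by
    rw [hP.natDegree_mul hE, hPd, hEd]
    omega
  rw [Polynomial.coeff_sub]
  rcases eq_or_lt_of_le hj with rfl | hj'
  · rw [← hdeg, hmonic.coeff_natDegree, hdeg, ← hPEd, hPE.coeff_natDegree, sub_self]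
  · rw [Polynomial.coeff_eq_zero_of_natDegree_lt (by omega),
      Polynomial.coeff_eq_zero_of_natDegree_lt (by omega), sub_self]

include hmonic hdeg hμ1 hμm hvmonic hvdeg hbez in
lemma wgood_step {P E : Polynomial (PowerSeries k)} {n : ℕ}
    (hg : WGood h m μ v n P E) :
    WGood h m μ v (n + 1)
      (P + Polynomial.C ((PowerSeries.X : PowerSeries k) ^ (n + 1))
        * (corrP μ b (Dres h m (n + 1) P E)).map (PowerSeries.C (R := k)))
      (E + Polynomial.C ((PowerSeries.X : PowerSeries k) ^ (n + 1))
        * (corrE μ a b v (Dres h m (n + 1) P E)).map (PowerSeries.C (R := k))) := by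
  obtain ⟨hPm, hPd, hEm, hEd, hPmap, hEmap, hdvd⟩ := hg
  set D := Dres h m (n + 1) P E with hD
  set dp := corrP μ b D with hdp
  set de := corrE μ a b v D with hde
  set xn := (PowerSeries.X : PowerSeries k) ^ (n + 1) with hxn
  have hvne : v ≠ 0 := hvmonic.ne_zero
  have hXμne : (Polynomial.X ^ μ : Polynomial k) ≠ 0 :=
    pow_ne_zero μ Polynomial.X_ne_zero
  -- degree bounds
  have hdp_lt : dp.degree < (μ : WithBot ℕ) := corrP_degree_lt μ b D
  have hD_lt : D.degree < (m : WithBot ℕ) := Dres_degree_lt h m (n+1) (by omega) P E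
  have hdpv_lt : (dp * v).degree < (m : WithBot ℕ) := by
    by_cases hdp0 : dp = 0
    · rw [hdp0, zero_mul, Polynomial.degree_zero]
      exact_mod_cast WithBot.bot_lt_coe m
    · have h1 : dp.natDegree < μ := (Polynomial.natDegree_lt_iff_degree_lt hdp0).mpr hdp_lt
      have h2 : (dp * v).natDegree < m := by
        rw [Polynomial.natDegree_mul hdp0 hvne, hvdeg]
        omega
      exact (Polynomial.natDegree_lt_iff_degree_lt (mul_ne_zero hdp0 hvne)).mp h2
  have hcorr : dp * v + de * Polynomial.X ^ μ = D := corr_eq μ a b v D hbez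
  have hde_lt : de.degree < ((m - μ : ℕ) : WithBot ℕ) := by
    by_cases hde0 : de = 0
    · rw [hde0, Polynomial.degree_zero]
      exact_mod_cast WithBot.bot_lt_coe (m - μ)
    · have hXde : de * Polynomial.X ^ μ = D - dp * v := by
        rw [← hcorr]; ring
      have hsub_lt : (D - dp * v).degree < (m : WithBot ℕ) :=
        lt_of_le_of_lt (Polynomial.degree_sub_le _ _) (max_lt hD_lt hdpv_lt)
      have hne : de * Polynomial.X ^ μ ≠ 0 := mul_ne_zero hde0 hXμne
      have h3 : (de * Polynomial.X ^ μ).natDegree < m := by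
        rw [Polynomial.natDegree_lt_iff_degree_lt hne, hXde]
        exact hsub_lt
      rw [Polynomial.natDegree_mul hde0 hXμne, Polynomial.natDegree_X_pow] at h3
      exact (Polynomial.natDegree_lt_iff_degree_lt hde0).mp (by omega)
  -- the lifted corrections
  set Dp := dp.map (PowerSeries.C (R := k)) with hDp
  set De := de.map (PowerSeries.C (R := k)) with hDe
  have hDp_deg : (Polynomial.C xn * Dp).degree < (μ : WithBot ℕ) := by
    have hDpdeg2 : Dp.degree < (μ : WithBot ℕ) :=
      lt_of_le_of_lt Polynomial.degree_map_le hdp_lt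
    refine lt_of_le_of_lt ?_ hDpdeg2
    calc (Polynomial.C xn * Dp).degree ≤ (Polynomial.C xn).degree + Dp.degree :=
          Polynomial.degree_mul_le _ _
      _ ≤ 0 + Dp.degree := add_le_add_left Polynomial.degree_C_le _
      _ = Dp.degree := by rw [zero_add]
  have hDe_deg : (Polynomial.C xn * De).degree < ((m - μ : ℕ) : WithBot ℕ) := by
    have hDedeg2 : De.degree < ((m - μ : ℕ) : WithBot ℕ) :=
      lt_of_le_of_lt Polynomial.degree_map_le hde_lt
    refine lt_of_le_of_lt ?_ hDedeg2
    calc (Polynomial.C xn * De).degree ≤ (Polynomial.C xn).degree + De.degree :=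
          Polynomial.degree_mul_le _ _
      _ ≤ 0 + De.degree := add_le_add_left Polynomial.degree_C_le _
      _ = De.degree := by rw [zero_add]
  have hPdeg : P.degree = (μ : WithBot ℕ) := by
    rw [Polynomial.degree_eq_natDegree hPm.ne_zero, hPd]
  have hEdeg : E.degree = ((m - μ : ℕ) : WithBot ℕ) := by
    rw [Polynomial.degree_eq_natDegree hEm.ne_zero, hEd]
  have hP'm : (P + Polynomial.C xn * Dp).Monic :=
    hPm.add_of_left (by rw [hPdeg]; exact hDp_deg)
  have hP'd : (P + Polynomial.C xn * Dp).natDegree = μ := by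
    rw [Polynomial.natDegree_eq_of_degree_eq
      (Polynomial.degree_add_eq_left_of_degree_lt (by rw [hPdeg]; exact hDp_deg)), hPd]
  have hE'm : (E + Polynomial.C xn * De).Monic :=
    hEm.add_of_left (by rw [hEdeg]; exact hDe_deg)
  have hE'd : (E + Polynomial.C xn * De).natDegree = m - μ := by
    rw [Polynomial.natDegree_eq_of_degree_eq
      (Polynomial.degree_add_eq_left_of_degree_lt (by rw [hEdeg]; exact hDe_deg)), hEd]
  have hxn0 : PowerSeries.constantCoeff (R := k) xn = 0 := by
    rw [hxn, map_pow, PowerSeries.constantCoeff_X, zero_pow (Nat.succ_ne_zero n)]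
  have hP'map : (P + Polynomial.C xn * Dp).map (PowerSeries.constantCoeff (R := k))
      = Polynomial.X ^ μ := by
    rw [Polynomial.map_add, Polynomial.map_mul, Polynomial.map_C, hxn0, Polynomial.C_0,
      zero_mul, add_zero, hPmap]
  have hE'map : (E + Polynomial.C xn * De).map (PowerSeries.constantCoeff (R := k)) = v := by
    rw [Polynomial.map_add, Polynomial.map_mul, Polynomial.map_C, hxn0, Polynomial.C_0,
      zero_mul, add_zero, hEmap]
  refine ⟨hP'm, hP'd, hE'm, hE'd, hP'map, hE'map, ?_⟩
  -- the divisibility improvement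
  intro j
  have hexpand : h - (P + Polynomial.C xn * Dp) * (E + Polynomial.C xn * De)
      = (h - P * E) - Polynomial.C xn * (Dp * E + De * P)
        - Polynomial.C (xn * xn) * (Dp * De) := by
    rw [map_mul]; ring
  rw [hexpand, Polynomial.coeff_sub, Polynomial.coeff_sub, Polynomial.coeff_C_mul,
    Polynomial.coeff_C_mul]
  have hterm3 : (PowerSeries.X : PowerSeries k) ^ (n + 2) ∣ xn * xn * (Dp * De).coeff j := by
    refine Dvd.dvd.mul_right ?_ _
    rw [hxn, ← pow_add]
    exact pow_dvd_pow _ (by omega)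
  refine dvd_sub ?_ hterm3
  -- show X^(n+2) ∣ (h - P*E).coeff j - xn * (Dp*E + De*P).coeff j
  rw [PowerSeries.X_pow_dvd_iff]
  intro i hi
  rw [map_sub]
  rcases Nat.lt_or_ge i (n + 1) with hilt | hige
  · rw [PowerSeries.X_pow_dvd_iff.mp (hdvd j) i hilt,
      PowerSeries.X_pow_dvd_iff.mp (Dvd.dvd.mul_right ⟨1, (mul_one xn).symm⟩ _) i hilt,
      sub_zero]
  · have hieq : i = n + 1 := by omega
    subst hieq
    -- coefficient n+1 of (h - P*E).coeff j equals D.coeff j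
    have h1 : PowerSeries.coeff (R := k) (n + 1) ((h - P * E).coeff j) = D.coeff j := by
      rw [hD, coeff_Dres]
      by_cases hjm : j < m
      · rw [if_pos hjm]
      · rw [if_neg hjm,
          coeff_sub_eq_zero_of_ge hmonic hdeg hμm hPm hPd hEm hEd (by omega), map_zero]
    -- coefficient n+1 of xn * A_j equals constant coefficient of A_j, which is D.coeff j
    have h2 : PowerSeries.coeff (R := k) (n + 1) (xn * (Dp * E + De * P).coeff j)
        = D.coeff j := by
      rw [hxn]
      have := PowerSeries.coeff_X_pow_mul ((Dp * E + De * P).coeff j) (n + 1) 0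
      rw [zero_add] at this
      rw [this, PowerSeries.coeff_zero_eq_constantCoeff_apply]
      have hmap : (Dp * E + De * P).map (PowerSeries.constantCoeff (R := k))
          = dp * v + de * Polynomial.X ^ μ := by
        rw [Polynomial.map_add, Polynomial.map_mul, Polynomial.map_mul, hDp, hDe,
          liftdown, liftdown, hEmap, hPmap]
      calc (PowerSeries.constantCoeff (R := k)) ((Dp * E + De * P).coeff j)
          = ((Dp * E + De * P).map (PowerSeries.constantCoeff (R := k))).coeff j := by
            rw [Polynomial.coeff_map]
        _ = D.coeff j := by rw [hmap, hcorr]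
    rw [h1, h2, sub_self]

end Step

end Weier

end NP
namespace NP

section WeierLimit

variable {k : Type*} [Field k]
variable {h : Polynomial (PowerSeries k)} {m μ : ℕ} {a b v : Polynomial k}

lemma wgood_zero (hmonic : h.Monic) (hdeg : h.natDegree = m)
    (hvmonic : v.Monic) (hvdeg : v.natDegree = m - μ)
    (hv : h.map (PowerSeries.constantCoeff (R := k)) = Polynomial.X ^ μ * v) :
    WGood h m μ v 0 (Polynomial.X ^ μ) (v.map (PowerSeries.C (R := k))) := by
  refine ⟨Polynomial.monic_X_pow μ, Polynomial.natDegree_X_pow μ,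
    hvmonic.map _, (hvmonic.natDegree_map _).trans hvdeg, ?_, liftdown v, ?_⟩
  · rw [Polynomial.map_pow, Polynomial.map_X]
  · intro j
    rw [zero_add, pow_one, PowerSeries.X_dvd_iff]
    have heq : (PowerSeries.constantCoeff (R := k))
        ((h - Polynomial.X ^ μ * v.map (PowerSeries.C (R := k))).coeff j)
        = ((h - Polynomial.X ^ μ * v.map (PowerSeries.C (R := k))).map
            (PowerSeries.constantCoeff (R := k))).coeff j := by
      rw [Polynomial.coeff_map]
    rw [heq, Polynomial.map_sub, Polynomial.map_mul, Polynomial.map_pow,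
      Polynomial.map_X, liftdown, hv, sub_self, Polynomial.coeff_zero]

variable (hmonic : h.Monic) (hdeg : h.natDegree = m) (hμ1 : 1 ≤ μ) (hμm : μ < m)
variable (hvmonic : v.Monic) (hvdeg : v.natDegree = m - μ)
variable (hbez : a * Polynomial.X ^ μ + b * v = 1)
variable (hv : h.map (PowerSeries.constantCoeff (R := k)) = Polynomial.X ^ μ * v)

include hmonic hdeg hμ1 hμm hvmonic hvdeg hbez hv in
lemma wseq_good (n : ℕ) :
    WGood h m μ v n (wseq h m μ a b v n).1 (wseq h m μ a b v n).2 := by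
  induction n with
  | zero => exact wgood_zero hmonic hdeg hvmonic hvdeg hv
  | succ n ih =>
    rw [wseq_succ]
    exact wgood_step hmonic hdeg hμ1 hμm hvmonic hvdeg hbez ih

lemma wseq_coeff_stable_1 (j i : ℕ) :
    ∀ n, i ≤ n → PowerSeries.coeff (R := k) i ((wseq h m μ a b v n).1.coeff j)
      = PowerSeries.coeff (R := k) i ((wseq h m μ a b v i).1.coeff j) := by
  intro n
  induction n with
  | zero => intro hi; obtain rfl := Nat.le_zero.mp hi; rfl
  | succ n ih =>
    intro hi
    rcases Nat.lt_or_ge i (n + 1) with hlt | hge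
    · have hstep : PowerSeries.coeff (R := k) i ((wseq h m μ a b v (n+1)).1.coeff j)
          = PowerSeries.coeff (R := k) i ((wseq h m μ a b v n).1.coeff j) := by
        rw [wseq_succ, Polynomial.coeff_add, map_add, Polynomial.coeff_C_mul,
          PowerSeries.X_pow_dvd_iff.mp (Dvd.dvd.mul_right
            ⟨1, (mul_one _).symm⟩ _) i hlt, add_zero]
      rw [hstep, ih (by omega)]
    · obtain rfl : i = n + 1 := by omega
      rfl

lemma wseq_coeff_stable_2 (j i : ℕ) :
    ∀ n, i ≤ n → PowerSeries.coeff (R := k) i ((wseq h m μ a b v n).2.coeff j)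
      = PowerSeries.coeff (R := k) i ((wseq h m μ a b v i).2.coeff j) := by
  intro n
  induction n with
  | zero => intro hi; obtain rfl := Nat.le_zero.mp hi; rfl
  | succ n ih =>
    intro hi
    rcases Nat.lt_or_ge i (n + 1) with hlt | hge
    · have hstep : PowerSeries.coeff (R := k) i ((wseq h m μ a b v (n+1)).2.coeff j)
          = PowerSeries.coeff (R := k) i ((wseq h m μ a b v n).2.coeff j) := by
        rw [wseq_succ, Polynomial.coeff_add, map_add, Polynomial.coeff_C_mul,
          PowerSeries.X_pow_dvd_iff.mp (Dvd.dvd.mul_right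
            ⟨1, (mul_one _).symm⟩ _) i hlt, add_zero]
      rw [hstep, ih (by omega)]
    · obtain rfl : i = n + 1 := by omega
      rfl

/-- The limit of the first components. -/
noncomputable def wlimP (h : Polynomial (PowerSeries k)) (m μ : ℕ) (a b v : Polynomial k) :
    Polynomial (PowerSeries k) :=
  ∑ j ∈ Finset.range (μ + 1),
    Polynomial.C (PowerSeries.mk fun i =>
      PowerSeries.coeff (R := k) i ((wseq h m μ a b v i).1.coeff j)) * Polynomial.X ^ j

/-- The limit of the second components. -/
noncomputable def wlimE (h : Polynomial (PowerSeries k)) (m μ : ℕ) (a b v : Polynomial k) :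
    Polynomial (PowerSeries k) :=
  ∑ j ∈ Finset.range (m - μ + 1),
    Polynomial.C (PowerSeries.mk fun i =>
      PowerSeries.coeff (R := k) i ((wseq h m μ a b v i).2.coeff j)) * Polynomial.X ^ j

lemma coeff_wlimP (j : ℕ) :
    (wlimP h m μ a b v).coeff j = if j < μ + 1 then
      (PowerSeries.mk fun i => PowerSeries.coeff (R := k) i ((wseq h m μ a b v i).1.coeff j))
      else 0 :=
  coeff_sum_C_mul_X_pow (μ + 1) _ j

lemma coeff_wlimE (j : ℕ) :
    (wlimE h m μ a b v).coeff j = if j < m - μ + 1 then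
      (PowerSeries.mk fun i => PowerSeries.coeff (R := k) i ((wseq h m μ a b v i).2.coeff j))
      else 0 :=
  coeff_sum_C_mul_X_pow (m - μ + 1) _ j

include hmonic hdeg hμ1 hμm hvmonic hvdeg hbez hv in
lemma wlimP_sub_dvd (n j : ℕ) :
    (PowerSeries.X : PowerSeries k) ^ n
      ∣ (wlimP h m μ a b v - (wseq h m μ a b v n).1).coeff j := by
  rw [PowerSeries.X_pow_dvd_iff]
  intro i hi
  rw [Polynomial.coeff_sub, map_sub, coeff_wlimP]
  by_cases hj : j < μ + 1
  · rw [if_pos hj, PowerSeries.coeff_mk, wseq_coeff_stable_1 j i n (by omega), sub_self]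
  · have hgood := wseq_good (a := a) (b := b) hmonic hdeg hμ1 hμm hvmonic hvdeg hbez hv n
    have hd1 : (wseq h m μ a b v n).1.natDegree = μ := hgood.2.1
    rw [if_neg hj, Polynomial.coeff_eq_zero_of_natDegree_lt (by omega)]
    simp

include hmonic hdeg hμ1 hμm hvmonic hvdeg hbez hv in
lemma wlimE_sub_dvd (n j : ℕ) :
    (PowerSeries.X : PowerSeries k) ^ n
      ∣ (wlimE h m μ a b v - (wseq h m μ a b v n).2).coeff j := by
  rw [PowerSeries.X_pow_dvd_iff]
  intro i hi
  rw [Polynomial.coeff_sub, map_sub, coeff_wlimE]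
  by_cases hj : j < m - μ + 1
  · rw [if_pos hj, PowerSeries.coeff_mk, wseq_coeff_stable_2 j i n (by omega), sub_self]
  · have hgood := wseq_good (a := a) (b := b) hmonic hdeg hμ1 hμm hvmonic hvdeg hbez hv n
    have hd2 : (wseq h m μ a b v n).2.natDegree = m - μ := hgood.2.2.2.1
    rw [if_neg hj, Polynomial.coeff_eq_zero_of_natDegree_lt (by omega)]
    simp

end WeierLimit

/-- Weierstrass/Hensel-type factorization over `k[[u]]`. -/
theorem weierstrass_split {k : Type*} [Field k] (h : Polynomial (PowerSeries k)) (m μ : ℕ)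
    (hmonic : h.Monic) (hdeg : h.natDegree = m) (hμ1 : 1 ≤ μ) (hμm : μ < m)
    (v : Polynomial k) (hv : h.map (PowerSeries.constantCoeff (R := k)) = Polynomial.X ^ μ * v)
    (hv0 : v.coeff 0 ≠ 0) :
    ∃ P E : Polynomial (PowerSeries k), P.Monic ∧ P.natDegree = μ ∧ h = P * E := by
  have hhm : (h.map (PowerSeries.constantCoeff (R := k))).Monic := hmonic.map _
  have hhd : (h.map (PowerSeries.constantCoeff (R := k))).natDegree = m := by
    rw [hmonic.natDegree_map, hdeg]
  have hvne : v ≠ 0 := by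
    rintro rfl
    rw [mul_zero] at hv
    exact hhm.ne_zero hv
  have hvmonic : v.Monic := by
    have h1 : (Polynomial.X ^ μ * v).leadingCoeff = 1 := by rw [← hv]; exact hhm
    rwa [Polynomial.leadingCoeff_mul, Polynomial.leadingCoeff_X_pow, one_mul] at h1
  have hvdeg : v.natDegree = m - μ := by
    have h1 : (Polynomial.X ^ μ * v).natDegree = m := by rw [← hv, hhd]
    rw [Polynomial.natDegree_mul (pow_ne_zero _ Polynomial.X_ne_zero) hvne,
      Polynomial.natDegree_X_pow] at h1
    omega
  have hμle : μ + v.natDegree = m := by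
    rw [hvdeg]
    have : μ ≤ m := hμm.le
    omega
  -- Bezout data
  have hcop : IsCoprime (Polynomial.X : Polynomial k) v := by
    refine ⟨-(Polynomial.C (v.coeff 0)⁻¹ * v.divX), Polynomial.C (v.coeff 0)⁻¹, ?_⟩
    have hd : v.divX * Polynomial.X + Polynomial.C (v.coeff 0) = v :=
      Polynomial.divX_mul_X_add v
    have hrw : -(Polynomial.C (v.coeff 0)⁻¹ * v.divX) * Polynomial.X
        + Polynomial.C (v.coeff 0)⁻¹ * v
        = Polynomial.C (v.coeff 0)⁻¹ * (v - v.divX * Polynomial.X) := by ring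
    rw [hrw, show v - v.divX * Polynomial.X = Polynomial.C (v.coeff 0) by
        rw [sub_eq_iff_eq_add, add_comm]; exact hd.symm,
      ← Polynomial.C_mul, inv_mul_cancel₀ hv0, Polynomial.C_1]
  have hcopμ : IsCoprime ((Polynomial.X : Polynomial k) ^ μ) v := hcop.pow_left
  obtain ⟨a, b, hbez⟩ := hcopμ
  have hgood : ∀ n, WGood h m μ v n (wseq h m μ a b v n).1 (wseq h m μ a b v n).2 :=
    wseq_good hmonic hdeg hμ1 hμm hvmonic hvdeg hbez hv
  set P := wlimP h m μ a b v with hP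
  set E := wlimE h m μ a b v with hE
  -- P is monic of degree μ
  have hcoeffμ : P.coeff μ = 1 := by
    rw [hP, coeff_wlimP, if_pos (Nat.lt_succ_self μ)]
    ext i
    rw [PowerSeries.coeff_mk]
    have hg := hgood i
    have hone : (wseq h m μ a b v i).1.coeff μ = 1 := by
      have h1 := hg.1.coeff_natDegree
      rwa [hg.2.1] at h1
    rw [hone]
  have hPdegle : P.natDegree ≤ μ := by
    refine Polynomial.natDegree_le_iff_coeff_eq_zero.mpr fun j hj => ?_
    rw [hP, coeff_wlimP, if_neg (by omega)]
  have hPmonic : P.Monic := Polynomial.monic_of_natDegree_le_of_coeff_eq_one μ hPdegle hcoeffμ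
  have hPdeg : P.natDegree = μ :=
    le_antisymm hPdegle (Polynomial.le_natDegree_of_ne_zero (by rw [hcoeffμ]; exact one_ne_zero))
  refine ⟨P, E, hPmonic, hPdeg, ?_⟩
  have hzero : h - P * E = 0 := by
    refine Polynomial.ext fun j => ?_
    rw [Polynomial.coeff_zero]
    refine ps_eq_zero_of_forall_X_pow_dvd _ fun n => ?_
    set Pn := (wseq h m μ a b v n).1 with hPn
    set En := (wseq h m μ a b v n).2 with hEn
    have hkey : h - P * E = (h - Pn * En) - ((E - En) * P + (P - Pn) * En) := by ring
    rw [hkey, Polynomial.coeff_sub, Polynomial.coeff_add]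
    refine dvd_sub ?_ (dvd_add ?_ ?_)
    · exact (pow_dvd_pow _ (Nat.le_succ n)).trans ((hgood n).2.2.2.2.2.2 j)
    · exact dvd_coeff_mul
        (wlimE_sub_dvd hmonic hdeg hμ1 hμm hvmonic hvdeg hbez hv n) j
    · exact dvd_coeff_mul
        (wlimP_sub_dvd hmonic hdeg hμ1 hμm hvmonic hvdeg hbez hv n) j
  exact sub_eq_zero.mp hzero

end NP
namespace NP

section Root

variable {k : Type*} [Field k]

/-- Coefficient `m-1` of `p(X + c)` for monic `p` of degree `m`. -/
lemma coeff_comp_X_add_C {A : Type*} [CommRing A] (p : Polynomial A) (m : ℕ)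
    (hp : p.Monic) (hdeg : p.natDegree = m) (hm : 1 ≤ m) (c : A) :
    (p.comp (Polynomial.X + Polynomial.C c)).coeff (m - 1)
      = p.coeff (m - 1) + (m : A) * c := by
  rw [Polynomial.comp_eq_sum_left,
    Polynomial.sum_over_range' p (fun n => by simp) (m + 1) (by omega)]
  rw [Polynomial.finset_sum_coeff]
  have hterm : ∀ i, (Polynomial.C (p.coeff i) * (Polynomial.X + Polynomial.C c) ^ i).coeff (m-1)
      = p.coeff i * (c ^ (i - (m-1)) * (i.choose (m-1) : A)) := by
    intro i
    rw [Polynomial.coeff_C_mul, Polynomial.coeff_X_add_C_pow]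
  rw [Finset.sum_congr rfl fun i _ => hterm i]
  rw [Finset.sum_range_succ]
  have hlast : p.coeff m * (c ^ (m - (m-1)) * (m.choose (m-1) : A)) = (m : A) * c := by
    have h1 : p.coeff m = 1 := by rw [← hdeg]; exact hp.coeff_natDegree
    have h2 : m - (m - 1) = 1 := by omega
    have h3 : m.choose (m - 1) = m := by
      obtain ⟨m', rfl⟩ : ∃ m', m = m' + 1 := ⟨m - 1, by omega⟩
      simp [Nat.choose_succ_self_right]
    rw [h1, h2, h3, pow_one, one_mul, mul_comm]
  rw [hlast]
  congr 1
  rw [Finset.sum_eq_single (m - 1)]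
  · rw [Nat.sub_self, pow_zero, Nat.choose_self, Nat.cast_one]; simp
  · intro i hi hne
    rw [Finset.mem_range] at hi
    rcases Nat.lt_or_ge i (m - 1) with hlt | hge
    · rw [Nat.choose_eq_zero_of_lt hlt, Nat.cast_zero, mul_zero, mul_zero]
    · omega
  · intro hmem
    exact absurd (Finset.mem_range.mpr (by omega)) hmem

/-- Transferring roots through a translation. -/
lemma root_transfer (f : Polynomial (PowerSeries k)) (b z : PowerSeries k) (N : ℕ) :
    Polynomial.eval z ((f.comp (Polynomial.X + Polynomial.C b)).map (expand N))
      = Polynomial.eval (z + expand N b) (f.map (expand N)) := by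
  rw [Polynomial.map_comp, Polynomial.eval_comp, Polynomial.map_add, Polynomial.map_X,
    Polynomial.map_C, Polynomial.eval_add, Polynomial.eval_X, Polynomial.eval_C]

variable [IsAlgClosed k] [CharZero k]

theorem exists_root_monic :
    ∀ m : ℕ, ∀ f : Polynomial (PowerSeries k), f.Monic → f.natDegree = m → 1 ≤ m →
      ∃ N : ℕ, 0 < N ∧ ∃ z : PowerSeries k,
        Polynomial.eval z (f.map (expand N : PowerSeries k →+* PowerSeries k)) = 0 := by
  intro m
  induction m using Nat.strong_induction_on with
  | _ m IH =>
    intro f hf hdeg hm1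
    classical
    -- Tschirnhaus translation
    have hmk : (m : k) ≠ 0 := Nat.cast_ne_zero.mpr (by omega)
    set b : PowerSeries k := -(f.coeff (m-1)) * PowerSeries.C (R := k) ((m : k)⁻¹) with hbdef
    set g : Polynomial (PowerSeries k) := f.comp (Polynomial.X + Polynomial.C b) with hgdef
    have hgmonic : g.Monic := hf.comp_X_add_C b
    have hgdeg : g.natDegree = m := by
      rw [hgdef, Polynomial.natDegree_comp, Polynomial.natDegree_X_add_C, hdeg, mul_one]
    have hmPS : (m : PowerSeries k) = PowerSeries.C (R := k) (m : k) := by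
      rw [map_natCast]
    have hgm1 : g.coeff (m - 1) = 0 := by
      rw [hgdef, coeff_comp_X_add_C f m hf hdeg hm1 b, hbdef, hmPS]
      calc f.coeff (m-1) + PowerSeries.C (R := k) (m : k)
            * (-(f.coeff (m-1)) * PowerSeries.C (R := k) ((m : k)⁻¹))
          = f.coeff (m-1) * (1 - PowerSeries.C (R := k) (m : k) * PowerSeries.C (R := k) ((m : k)⁻¹)) := by
            ring
        _ = 0 := by rw [← map_mul, mul_inv_cancel₀ hmk, map_one, sub_self, mul_zero]
    by_cases hall : ∀ i < m, g.coeff i = 0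
    · -- all lower coefficients vanish: 0 is a root of g
      refine ⟨1, one_pos, 0 + expand 1 b, ?_⟩
      rw [← root_transfer f b 0 1, ← hgdef, ← Polynomial.coeff_zero_eq_eval_zero,
        Polynomial.coeff_map, hall 0 (by omega), map_zero]
    · push_neg at hall
      obtain ⟨iw, hiwm, hiw⟩ := hall
      set S : Finset ℕ := (Finset.range m).filter (fun i => g.coeff i ≠ 0) with hSdef
      have hSne : S.Nonempty := ⟨iw, Finset.mem_filter.mpr ⟨Finset.mem_range.mpr hiwm, hiw⟩⟩
      have hSmem : ∀ i ∈ S, i < m ∧ g.coeff i ≠ 0 := fun i hi => by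
        obtain ⟨h1, h2⟩ := Finset.mem_filter.mp hi
        exact ⟨Finset.mem_range.mp h1, h2⟩
      have hSm1 : (m - 1) ∉ S := fun hmem => (hSmem _ hmem).2 hgm1
      have hm2 : 2 ≤ m := by
        by_contra hc
        obtain rfl : m = 1 := by omega
        obtain ⟨i, hi⟩ := hSne
        have h1 := (hSmem i hi).1
        interval_cases i
        exact hSm1 hi
      -- the order function
      set o : ℕ → ℕ := fun i =>
        if hx : ∃ n, PowerSeries.coeff (R := k) n (g.coeff i) ≠ 0 then Nat.find hx else 0 with hodef
      have ho : ∀ i ∈ S, PowerSeries.coeff (R := k) (o i) (g.coeff i) ≠ 0 ∧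
          ∀ j < o i, PowerSeries.coeff (R := k) j (g.coeff i) = 0 := by
        intro i hi
        have hgi : g.coeff i ≠ 0 := (hSmem i hi).2
        have hx : ∃ n, PowerSeries.coeff (R := k) n (g.coeff i) ≠ 0 := by
          by_contra hc
          push_neg at hc
          exact hgi (PowerSeries.ext fun n => by rw [hc n, map_zero])
        constructor
        · rw [hodef]; simp only [dif_pos hx]; exact Nat.find_spec hx
        · intro j hj
          rw [hodef] at hj; simp only [dif_pos hx] at hj
          have hmin := Nat.find_min hx hj
          simpa using hmin
      set q : ℕ := m.factorial with hqdef
      have hq : 0 < q := Nat.factorial_pos m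
      set p : ℕ := S.inf' hSne (fun i => q * o i / (m - i)) with hpdef
      have hkey1 : ∀ i ∈ S, p * (m - i) ≤ q * o i := by
        intro i hi
        have h1 : p ≤ q * o i / (m - i) := Finset.inf'_le _ hi
        have h2 : 0 < m - i := by have := (hSmem i hi).1; omega
        exact (Nat.le_div_iff_mul_le h2).mp h1
      obtain ⟨i₀, hi₀S, hpi₀⟩ := Finset.exists_mem_eq_inf' hSne (fun i => q * o i / (m - i))
      have hi₀m : i₀ < m := (hSmem i₀ hi₀S).1
      have hkey2 : p * (m - i₀) = q * o i₀ := by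
        have h2 : 0 < m - i₀ := by omega
        have hdvdq : (m - i₀) ∣ q := Nat.dvd_factorial h2 (by omega)
        rw [hpdef, hpi₀, Nat.div_mul_cancel (hdvdq.mul_right (o i₀))]
      -- divide the expanded coefficients by powers of X
      have hdvd : ∀ i, (PowerSeries.X : PowerSeries k) ^ (p * (m - i))
          ∣ expand q (g.coeff i) := by
        intro i
        by_cases hiS : i ∈ S
        · rw [PowerSeries.X_pow_dvd_iff]
          intro j hj
          by_cases hqj : q ∣ j
          · obtain ⟨j', rfl⟩ := hqj
            rw [coeff_expand_mul q hq]
            refine (ho i hiS).2 j' ?_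
            have := hkey1 i hiS
            have : q * j' < q * o i := by omega
            exact Nat.lt_of_mul_lt_mul_left this
          · exact coeff_expand_of_not_dvd hqj _
        · by_cases him : i < m
          · have : g.coeff i = 0 := by
              by_contra hc
              exact hiS (Finset.mem_filter.mpr ⟨Finset.mem_range.mpr him, hc⟩)
            rw [this, map_zero]
            exact dvd_zero _
          · have : m - i = 0 := by omega
            rw [this, Nat.mul_zero, pow_zero]
            exact one_dvd _
      set bb : ℕ → PowerSeries k := fun i => (hdvd i).choose with hbbdef
      have hbb : ∀ i, expand q (g.coeff i)
          = (PowerSeries.X : PowerSeries k) ^ (p * (m - i)) * bb i := fun i =>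
        (hdvd i).choose_spec
      have hXne : (PowerSeries.X : PowerSeries k) ≠ 0 := PowerSeries.X_ne_zero
      have hbbm : bb m = 1 := by
        have h1 := hbb m
        rw [Nat.sub_self, Nat.mul_zero, pow_zero, one_mul] at h1
        have h2 : g.coeff m = 1 := by rw [← hgdeg]; exact hgmonic.coeff_natDegree
        rw [h2, map_one] at h1
        exact h1.symm
      have hbbm1 : bb (m - 1) = 0 := by
        have h1 := hbb (m - 1)
        rw [hgm1, map_zero] at h1
        rcases mul_eq_zero.mp h1.symm with h | h
        · exact absurd h (pow_ne_zero _ hXne)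
        · exact h
      have hbb0 : PowerSeries.constantCoeff (R := k) (bb i₀) ≠ 0 := by
        have h1 := congrArg (PowerSeries.coeff (R := k) (q * o i₀)) (hbb i₀)
        rw [coeff_expand_mul q hq, hkey2] at h1
        have h2 := PowerSeries.coeff_X_pow_mul (bb i₀) (q * o i₀) 0
        rw [zero_add] at h2
        rw [h2, PowerSeries.coeff_zero_eq_constantCoeff_apply] at h1
        rw [← h1]
        exact (ho i₀ hi₀S).1
      -- the transformed polynomial g₁
      set g₁ : Polynomial (PowerSeries k) :=
        ∑ i ∈ Finset.range (m + 1), Polynomial.C (bb i) * Polynomial.X ^ i with hg₁def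
      have hg₁coeff : ∀ j, g₁.coeff j = if j < m + 1 then bb j else 0 := fun j =>
        coeff_sum_C_mul_X_pow (m + 1) bb j
      have hg₁m : g₁.coeff m = 1 := by rw [hg₁coeff, if_pos (by omega), hbbm]
      have hg₁degle : g₁.natDegree ≤ m :=
        Polynomial.natDegree_le_iff_coeff_eq_zero.mpr fun j hj => by
          rw [hg₁coeff, if_neg (by omega)]
      have hg₁monic : g₁.Monic :=
        Polynomial.monic_of_natDegree_le_of_coeff_eq_one m hg₁degle hg₁m
      have hg₁deg : g₁.natDegree = m :=
        le_antisymm hg₁degle (Polynomial.le_natDegree_of_ne_zero (by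
          rw [hg₁m]; exact one_ne_zero))
      -- reduction mod u and its root
      set gbar : Polynomial k := g₁.map (PowerSeries.constantCoeff (R := k)) with hgbardef
      have hgbarmonic : gbar.Monic := hg₁monic.map _
      have hgbardeg : gbar.natDegree = m := by
        rw [hgbardef, hg₁monic.natDegree_map, hg₁deg]
      obtain ⟨c, hc⟩ := IsAlgClosed.exists_root gbar (by
        rw [Polynomial.degree_eq_natDegree hgbarmonic.ne_zero, hgbardeg]
        exact_mod_cast (by omega : m ≠ 0))
      -- translate by c
      set h2 : Polynomial (PowerSeries k) :=
        g₁.comp (Polynomial.X + Polynomial.C (PowerSeries.C (R := k) c)) with hh2def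
      have hh2monic : h2.Monic := hg₁monic.comp_X_add_C _
      have hh2deg : h2.natDegree = m := by
        rw [hh2def, Polynomial.natDegree_comp, Polynomial.natDegree_X_add_C, hg₁deg, mul_one]
      have hmaph2 : h2.map (PowerSeries.constantCoeff (R := k))
          = gbar.comp (Polynomial.X + Polynomial.C c) := by
        rw [hh2def, Polynomial.map_comp, Polynomial.map_add, Polynomial.map_X,
          Polynomial.map_C, PowerSeries.constantCoeff_C, hgbardef]
      have hmaph2ne : h2.map (PowerSeries.constantCoeff (R := k)) ≠ 0 :=
        (hh2monic.map _).ne_zero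
      set μ : ℕ := Polynomial.rootMultiplicity 0 (h2.map (PowerSeries.constantCoeff (R := k)))
        with hμdef
      have hμ1 : 1 ≤ μ := by
        rw [hμdef]
        refine (Polynomial.rootMultiplicity_pos hmaph2ne).mpr ?_
        rw [hmaph2]
        show Polynomial.eval 0 (gbar.comp _) = 0
        rw [Polynomial.eval_comp, Polynomial.eval_add, Polynomial.eval_X, Polynomial.eval_C,
          zero_add]
        exact hc
      obtain ⟨v, hv⟩ : ∃ v, h2.map (PowerSeries.constantCoeff (R := k)) = Polynomial.X ^ μ * v := by
        obtain ⟨v, hv⟩ := Polynomial.pow_rootMultiplicity_dvd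
          (h2.map (PowerSeries.constantCoeff (R := k))) 0
        exact ⟨v, by rwa [Polynomial.C_0, sub_zero] at hv⟩
      have hv0 : v.coeff 0 ≠ 0 := by
        intro hc0
        obtain ⟨w, hw⟩ := Polynomial.X_dvd_iff.mpr hc0
        have : (Polynomial.X - Polynomial.C (0:k)) ^ (μ + 1) ∣
            h2.map (PowerSeries.constantCoeff (R := k)) := by
          rw [Polynomial.C_0, sub_zero, hv, hw, pow_succ]
          exact ⟨w, by ring⟩
        have := (Polynomial.le_rootMultiplicity_iff hmaph2ne).mpr this
        omega
      have hvne : v ≠ 0 := fun hc0 => hv0 (by rw [hc0, Polynomial.coeff_zero])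
      have hμlem : μ + v.natDegree = m := by
        have h1 : (h2.map (PowerSeries.constantCoeff (R := k))).natDegree = m := by
          rw [hh2monic.natDegree_map, hh2deg]
        rw [hv, Polynomial.natDegree_mul (pow_ne_zero _ Polynomial.X_ne_zero) hvne,
          Polynomial.natDegree_X_pow] at h1
        exact h1
      have hμm : μ < m := by
        by_contra hcon
        have hμeq : μ = m := by omega
        have hvdeg0 : v.natDegree = 0 := by omega
        have hvmon : v.Monic := by
          have h1 : (Polynomial.X ^ μ * v).leadingCoeff = 1 := by
            rw [← hv]; exact hh2monic.map _
          rwa [Polynomial.leadingCoeff_mul, Polynomial.leadingCoeff_X_pow, one_mul] at h1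
        have hv1 : v = 1 := hvmon.natDegree_eq_zero.mp hvdeg0
        have hXm : h2.map (PowerSeries.constantCoeff (R := k)) = Polynomial.X ^ m := by
          rw [hv, hv1, mul_one, hμeq]
        -- coefficient m-1 gives m * c = 0, hence c = 0
        have hcoeffm1 : (h2.map (PowerSeries.constantCoeff (R := k))).coeff (m-1) = (m : k) * c := by
          rw [Polynomial.coeff_map, hh2def,
            coeff_comp_X_add_C g₁ m hg₁monic hg₁deg (by omega) _]
          rw [hg₁coeff, if_pos (by omega), hbbm1, zero_add, map_mul, map_natCast,
            PowerSeries.constantCoeff_C]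
        have hc0 : c = 0 := by
          have h1 : (Polynomial.X ^ m : Polynomial k).coeff (m-1) = 0 := by
            rw [Polynomial.coeff_X_pow, if_neg (by omega)]
          rw [hXm, h1] at hcoeffm1
          rcases mul_eq_zero.mp hcoeffm1.symm with h | h
          · exact absurd h hmk
          · exact h
        -- then gbar = X^m, contradicting bb i₀ having nonzero constant coefficient
        have hgbarXm : gbar = Polynomial.X ^ m := by
          have h1 : gbar.comp (Polynomial.X + Polynomial.C c) = Polynomial.X ^ m := by
            rw [← hmaph2, hXm]
          rw [hc0, Polynomial.C_0, add_zero, Polynomial.comp_X] at h1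
          exact h1
        have h2' : gbar.coeff i₀ = 0 := by
          rw [hgbarXm, Polynomial.coeff_X_pow, if_neg (by omega)]
        have h3 : gbar.coeff i₀ ≠ 0 := by
          rw [hgbardef, Polynomial.coeff_map, hg₁coeff, if_pos (by omega)]
          exact hbb0
        exact h3 h2'
      -- Weierstrass splitting and induction
      obtain ⟨P, E, hPmon, hPdeg, hPE⟩ :=
        weierstrass_split h2 m μ hh2monic hh2deg hμ1 hμm v hv hv0
      obtain ⟨N₂, hN₂, w, hw⟩ := IH μ hμm P hPmon hPdeg hμ1
      have hrooth2 : Polynomial.eval w (h2.map (expand N₂)) = 0 := by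
        rw [hPE, Polynomial.map_mul, Polynomial.eval_mul, hw, zero_mul]
      set z₁ : PowerSeries k := w + expand N₂ (PowerSeries.C (R := k) c) with hz₁def
      have hrootg₁ : Polynomial.eval z₁ (g₁.map (expand N₂)) = 0 := by
        rw [hz₁def, ← root_transfer g₁ (PowerSeries.C (R := k) c) w N₂, ← hh2def]
        exact hrooth2
      -- the key substitution identity
      have hKI : Polynomial.eval ((PowerSeries.X : PowerSeries k) ^ (p * N₂) * z₁)
            (g.map (expand (q * N₂)))
          = (PowerSeries.X : PowerSeries k) ^ (p * N₂ * m)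
            * Polynomial.eval z₁ (g₁.map (expand N₂)) := by
        have hdegmap : (g.map (expand (q * N₂))).natDegree < m + 1 :=
          lt_of_le_of_lt Polynomial.natDegree_map_le (by omega)
        have hdegmap₁ : (g₁.map (expand N₂)).natDegree < m + 1 :=
          lt_of_le_of_lt Polynomial.natDegree_map_le (by omega)
        rw [Polynomial.eval_eq_sum_range' hdegmap, Polynomial.eval_eq_sum_range' hdegmap₁,
          Finset.mul_sum]
        refine Finset.sum_congr rfl fun i hi => ?_
        rw [Finset.mem_range] at hi
        have him : i ≤ m := by omega
        have hexp : N₂ * (p * (m - i)) + p * N₂ * i = p * N₂ * m := by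
          have h1 : N₂ * (p * (m - i)) = p * N₂ * (m - i) := by ring
          rw [h1, ← Nat.mul_add, Nat.sub_add_cancel him]
        have hXp : (PowerSeries.X : PowerSeries k) ^ (N₂ * (p * (m - i)))
            * (PowerSeries.X : PowerSeries k) ^ (p * N₂ * i)
            = (PowerSeries.X : PowerSeries k) ^ (p * N₂ * m) := by
          rw [← pow_add, hexp]
        rw [Polynomial.coeff_map, Polynomial.coeff_map,
          ← expand_expand N₂ q hN₂ (g.coeff i), hbb i, map_mul,
          expand_X_pow N₂ (p * (m - i)) hN₂, hg₁coeff, if_pos (by omega),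
          mul_pow, ← pow_mul]
        rw [← hXp]
        ring
      rw [hrootg₁, mul_zero] at hKI
      -- transfer back to f
      refine ⟨q * N₂, Nat.mul_pos hq hN₂, (PowerSeries.X : PowerSeries k) ^ (p * N₂) * z₁
        + expand (q * N₂) b, ?_⟩
      rw [← root_transfer f b _ (q * N₂), ← hgdef]
      exact hKI

end Root

end NP
namespace NP

section Factor

variable {k : Type*} [Field k] [IsAlgClosed k] [CharZero k]

theorem factor_lemma :
    ∀ m : ℕ, ∀ f : Polynomial (PowerSeries k), f.natDegree = m →
      PowerSeries.constantCoeff (R := k) f.leadingCoeff ≠ 0 →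
      ∃ N : ℕ, 0 < N ∧ ∃ y : Fin m → PowerSeries k,
        f.map (expand N : PowerSeries k →+* PowerSeries k)
          = Polynomial.C (expand N f.leadingCoeff)
            * ∏ i : Fin m, (Polynomial.X - Polynomial.C (y i)) := by
  intro m
  induction m using Nat.strong_induction_on with
  | _ m IH =>
    intro f hdeg hlead
    rcases Nat.eq_zero_or_pos m with rfl | hm1
    · -- degree 0
      have hfc : f = Polynomial.C (f.coeff 0) := Polynomial.eq_C_of_natDegree_eq_zero hdeg
      refine ⟨1, one_pos, fun _ => 0, ?_⟩
      rw [Finset.univ_eq_empty, Finset.prod_empty, mul_one]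
      have hlc : f.leadingCoeff = f.coeff 0 := by
        rw [Polynomial.leadingCoeff, hdeg]
      rw [hlc]
      conv_lhs => rw [hfc]
      rw [Polynomial.map_C]
    · -- degree ≥ 1 : find a root, divide, recurse
      obtain ⟨m', rfl⟩ : ∃ m', m = m' + 1 := ⟨m - 1, by omega⟩
      set a : PowerSeries k := f.leadingCoeff with hadef
      have hane : a ≠ 0 := fun hc => hlead (by rw [hc, map_zero])
      have hainv : a⁻¹ * a = 1 := PowerSeries.inv_mul_cancel a hlead
      have hmula : a * a⁻¹ = 1 := PowerSeries.mul_inv_cancel a hlead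
      have hainvne : a⁻¹ ≠ 0 := fun hc => by
        rw [hc, zero_mul] at hainv
        exact zero_ne_one hainv
      set f' : Polynomial (PowerSeries k) := Polynomial.C a⁻¹ * f with hf'def
      have hf'deg : f'.natDegree = m' + 1 := by
        rw [hf'def, Polynomial.natDegree_C_mul hainvne, hdeg]
      have hf'monic : f'.Monic := by
        have h1 : f'.leadingCoeff = a⁻¹ * a := by
          rw [hf'def, Polynomial.leadingCoeff_mul, Polynomial.leadingCoeff_C, hadef]
        rw [Polynomial.Monic, h1, hainv]
      obtain ⟨N₁, hN₁, z, hz⟩ := exists_root_monic (m' + 1) f' hf'monic hf'deg (by omega)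
      have hfof' : Polynomial.C a * f' = f := by
        rw [hf'def, ← mul_assoc, ← Polynomial.C_mul, hmula, Polynomial.C_1, one_mul]
      have hrootf : Polynomial.eval z (f.map (expand N₁)) = 0 := by
        rw [← hfof', Polynomial.map_mul, Polynomial.eval_mul, Polynomial.map_C,
          Polynomial.eval_C, hz, mul_zero]
      obtain ⟨g, hfg⟩ := Polynomial.dvd_iff_isRoot.mpr hrootf
      have hσa_cc : PowerSeries.constantCoeff (R := k) (expand N₁ a) ≠ 0 := by
        rw [constantCoeff_expand]; exact hlead
      have hσa_ne : expand N₁ a ≠ 0 := fun hc => hσa_cc (by rw [hc, map_zero])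
      have hmapdeg : (f.map (expand N₁)).natDegree = m' + 1 := by
        rw [Polynomial.natDegree_map_of_leadingCoeff_ne_zero _ hσa_ne, hdeg]
      have hmaplead : (f.map (expand N₁)).leadingCoeff = expand N₁ a :=
        Polynomial.leadingCoeff_map_of_leadingCoeff_ne_zero _ hσa_ne
      have hmapne : f.map (expand N₁) ≠ 0 := fun hc =>
        hσa_ne (by rw [← hmaplead, hc, Polynomial.leadingCoeff_zero])
      have hgne : g ≠ 0 := fun hc => hmapne (by rw [hfg, hc, mul_zero])
      have hXz : (Polynomial.X - Polynomial.C z : Polynomial (PowerSeries k)) ≠ 0 :=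
        Polynomial.X_sub_C_ne_zero z
      have hgdeg : g.natDegree = m' := by
        have h1 := hmapdeg
        rw [hfg, Polynomial.natDegree_mul hXz hgne, Polynomial.natDegree_X_sub_C] at h1
        omega
      have hglead : g.leadingCoeff = expand N₁ a := by
        have h1 := hmaplead
        rw [hfg, Polynomial.leadingCoeff_mul, Polynomial.leadingCoeff_X_sub_C, one_mul] at h1
        exact h1
      have hglead_cc : PowerSeries.constantCoeff (R := k) g.leadingCoeff ≠ 0 := by
        rw [hglead]; exact hσa_cc
      obtain ⟨N₂, hN₂, y', hy'⟩ := IH m' (by omega) g hgdeg hglead_cc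
      refine ⟨N₁ * N₂, Nat.mul_pos hN₁ hN₂, Fin.cons (expand N₂ z) y', ?_⟩
      have hcompmap : f.map (expand (N₁ * N₂) : PowerSeries k →+* PowerSeries k)
          = (f.map (expand N₁)).map (expand N₂) := by
        rw [Polynomial.map_map]
        congr 1
        exact (RingHom.ext fun x => expand_expand N₂ N₁ hN₂ x).symm
      rw [hcompmap, hfg, Polynomial.map_mul, Polynomial.map_sub, Polynomial.map_X,
        Polynomial.map_C, hy', hglead, expand_expand N₂ N₁ hN₂ a, Fin.prod_univ_succ]
      simp only [Fin.cons_zero, Fin.cons_succ]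
      ring

end Factor

end NP

open NP in
/-- Newton–Puiseux theorem. -/
theorem newton_puiseux_factorization'
    (k : Type*) [Field k] [IsAlgClosed k] [CharZero k]
    (f : Polynomial (Polynomial k)) (m : ℕ) (hm : 1 ≤ m) (hdeg : f.natDegree = m)
    (hlead : (f.leadingCoeff).eval 0 ≠ 0) :
    ∃ N : ℕ, 0 < N ∧ ∃ y : Fin m → PowerSeries k,
      f.map (Polynomial.eval₂RingHom (PowerSeries.C (R := k))
          ((PowerSeries.X : PowerSeries k) ^ N)) =
        Polynomial.C
            (Polynomial.eval₂ (PowerSeries.C (R := k)) ((PowerSeries.X : PowerSeries k) ^ N)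
              f.leadingCoeff) *
          ∏ i : Fin m, (Polynomial.X - Polynomial.C (y i)) := by
  set φ : Polynomial k →+* PowerSeries k :=
    Polynomial.eval₂RingHom (PowerSeries.C (R := k)) (PowerSeries.X : PowerSeries k) with hφdef
  have hccφ : ∀ aa : Polynomial k,
      PowerSeries.constantCoeff (R := k) (φ aa) = aa.eval 0 := by
    intro aa
    rw [hφdef, Polynomial.coe_eval₂RingHom, Polynomial.hom_eval₂]
    have h1 : (PowerSeries.constantCoeff (R := k)).comp (PowerSeries.C (R := k)) = RingHom.id k :=
      RingHom.ext fun x => PowerSeries.constantCoeff_C x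
    rw [h1, PowerSeries.constantCoeff_X]
    rfl
  set F₀ : Polynomial (PowerSeries k) := f.map φ with hF₀def
  have hl0 : PowerSeries.constantCoeff (R := k) (φ f.leadingCoeff) ≠ 0 := by
    rw [hccφ]; exact hlead
  have hφlne : φ f.leadingCoeff ≠ 0 := fun hc => hl0 (by rw [hc, map_zero])
  have hF₀deg : F₀.natDegree = m := by
    rw [hF₀def, Polynomial.natDegree_map_of_leadingCoeff_ne_zero _ hφlne, hdeg]
  have hF₀lead : F₀.leadingCoeff = φ f.leadingCoeff :=
    Polynomial.leadingCoeff_map_of_leadingCoeff_ne_zero _ hφlne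
  have hF₀cc : PowerSeries.constantCoeff (R := k) F₀.leadingCoeff ≠ 0 := by
    rw [hF₀lead]; exact hl0
  obtain ⟨N, hN, y, hy⟩ := NP.factor_lemma m F₀ hF₀deg hF₀cc
  refine ⟨N, hN, y, ?_⟩
  have hhomeq : ((expand N : PowerSeries k →+* PowerSeries k).comp φ)
      = Polynomial.eval₂RingHom (PowerSeries.C (R := k))
          ((PowerSeries.X : PowerSeries k) ^ N) := by
    refine Polynomial.ringHom_ext (fun aa => ?_) ?_
    · rw [RingHom.comp_apply, hφdef, Polynomial.coe_eval₂RingHom,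
        Polynomial.coe_eval₂RingHom, Polynomial.eval₂_C, Polynomial.eval₂_C, expand_C]
    · rw [RingHom.comp_apply, hφdef, Polynomial.coe_eval₂RingHom,
        Polynomial.coe_eval₂RingHom, Polynomial.eval₂_X, Polynomial.eval₂_X,
        expand_X N hN]
  have hconst : Polynomial.eval₂ (PowerSeries.C (R := k)) ((PowerSeries.X : PowerSeries k) ^ N)
      f.leadingCoeff = expand N F₀.leadingCoeff := by
    rw [hF₀lead]
    have h1 := congrArg (fun (ψ : Polynomial k →+* PowerSeries k) => ψ f.leadingCoeff) hhomeq
    simp only [RingHom.comp_apply] at h1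
    rw [show Polynomial.eval₂ (PowerSeries.C (R := k)) ((PowerSeries.X : PowerSeries k) ^ N)
        f.leadingCoeff
      = (Polynomial.eval₂RingHom (PowerSeries.C (R := k))
          ((PowerSeries.X : PowerSeries k) ^ N)) f.leadingCoeff from rfl]
    exact h1.symm
  calc f.map (Polynomial.eval₂RingHom (PowerSeries.C (R := k))
        ((PowerSeries.X : PowerSeries k) ^ N))
      = f.map ((expand N : PowerSeries k →+* PowerSeries k).comp φ) := by rw [hhomeq]
    _ = F₀.map (expand N) := by rw [hF₀def, Polynomial.map_map]
    _ = Polynomial.C (expand N F₀.leadingCoeff)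
          * ∏ i : Fin m, (Polynomial.X - Polynomial.C (y i)) := hy
    _ = _ := by rw [hconst]

/-- Newton–Puiseux theorem: if `f ∈ k[x][y]` has degree `m ≥ 1` in `y` and its leading
coefficient `a_m(x)` satisfies `a_m(0) ≠ 0`, then there is a positive integer `N` and power
series `y_1, …, y_m ∈ k[[u]]` such that, substituting `u^N` for `x`,
`f(u^N, y) = a_m(u^N) · ∏_{i=1}^m (y − y_i(u))` in `(k[[u]])[y]`. -/
theorem newton_puiseux_factorization
    (k : Type*) [Field k] [IsAlgClosed k] [CharZero k]
    (f : Polynomial (Polynomial k)) (m : ℕ) (hm : 1 ≤ m) (hdeg : f.natDegree = m)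
    (hlead : (f.leadingCoeff).eval 0 ≠ 0) :
    ∃ N : ℕ, 0 < N ∧ ∃ y : Fin m → PowerSeries k,
      f.map (Polynomial.eval₂RingHom (PowerSeries.C (R := k))
          ((PowerSeries.X : PowerSeries k) ^ N)) =
        Polynomial.C
            (Polynomial.eval₂ (PowerSeries.C (R := k)) ((PowerSeries.X : PowerSeries k) ^ N)
              f.leadingCoeff) *
          ∏ i : Fin m, (Polynomial.X - Polynomial.C (y i)) := by
  exact newton_puiseux_factorization' k f m hm hdeg hlead
end

section
/- Let k be a field of characteristic 0, let M be a positive integer, and let B = Σ_{j≥0} b_j u^j ∈ k[[u]] be such that the greatest common divisor of M together with all exponents j in the support of B equals 1. Let ω, ω′ ∈ k[[t]] be nonzero power series with ord_t(ω) ≥ 1 and ord_t(ω′) ≥ 1, satisfying ω^M = ω′^M and B(ω) = B(ω′). Then ω = ω′. (Given the gcd normalization, the series ω is uniquely determined by the pair (ω^M, B(ω)); this is the uniqueness assertion in the proof of the parametrization lemma: the greatest common divisor of M and the exponents of the nonzero terms of y_τ(ω) being 1, ω is uniquely determined by x(φ) and y(φ).) -/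
/-- Substitution of a power series `ω` (with positive order) into a power series
`B = Σ_{j≥0} b_j u^j`, giving `B(ω) = Σ_{j≥0} b_j ω^j`.  When `ord ω ≥ 1`, the coefficient
of `t^n` in `ω^j` vanishes for `j > n`, so the following coefficient-wise formula agrees
with the usual substitution. -/
noncomputable def PowerSeries.substAt {k : Type*} [Field k] (ω B : PowerSeries k) :
    PowerSeries k :=
  PowerSeries.mk fun n =>
    ∑ j ∈ Finset.range (n + 1), PowerSeries.coeff j B * PowerSeries.coeff n (ω ^ j)

section Aux

variable {k : Type*} [Field k]

/-- The order of a power of a power series. -/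
lemma my_order_pow (ω : PowerSeries k) (j : ℕ) : (ω ^ j).order = (j : ℕ∞) * ω.order := by
  induction j with
  | zero => simp [PowerSeries.order_one]
  | succ n ih =>
      rw [pow_succ, PowerSeries.order_mul, ih, Nat.cast_add, Nat.cast_one, add_mul, one_mul]

/-- If `ω ≠ 0` has positive order and `∑ c j • ω^j` vanishes (coefficient-wise),
then all `c j` vanish. -/
lemma my_support_zero (ω : PowerSeries k) (hω : ω ≠ 0) (h1 : 1 ≤ ω.order) (c : ℕ → k)
    (h : ∀ n, ∑ j ∈ Finset.range (n + 1), c j * PowerSeries.coeff n (ω ^ j) = 0) :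
    ∀ j, c j = 0 := by
  obtain ⟨e, he⟩ : ∃ e : ℕ, ω.order = (e : ℕ∞) := by
    have := PowerSeries.order_finite_iff_ne_zero.mpr hω
    lift ω.order to ℕ using this.ne with e
    exact ⟨e, rfl⟩
  have he1 : 1 ≤ e := by
    rw [he] at h1; exact_mod_cast h1
  intro j
  induction j using Nat.strong_induction_on with
  | _ j ih =>
    have hje : j ≤ j * e := Nat.le_mul_of_pos_right j he1
    have hsum := h (j * e)
    have hmem : j ∈ Finset.range (j * e + 1) := Finset.mem_range.mpr (Nat.lt_succ_of_le hje)
    rw [Finset.sum_eq_single_of_mem j hmem ?side] at hsum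
    · have hne : PowerSeries.coeff (j * e) (ω ^ j) ≠ 0 := by
        have ho : (ω ^ j).order = ((j * e : ℕ) : ℕ∞) := by
          rw [my_order_pow, he]; push_cast; ring
        exact (PowerSeries.order_eq_nat.mp ho).1
      exact (mul_eq_zero.mp hsum).resolve_right hne
    · intro i _ hij
      rcases lt_or_gt_of_ne hij with hlt | hgt
      · rw [ih i hlt, zero_mul]
      · have : PowerSeries.coeff (j * e) (ω ^ i) = 0 := by
          apply PowerSeries.coeff_of_lt_order
          rw [my_order_pow, he]
          have : j * e < i * e := Nat.mul_lt_mul_of_lt_of_le hgt le_rfl he1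
          exact_mod_cast Nat.cast_lt.mpr this
        rw [this, mul_zero]

/-- In characteristic zero, an `M`-th root of unity in `k⟦X⟧` is a constant. -/
lemma my_root_const [CharZero k] {z : PowerSeries k} {M : ℕ} (hM : 0 < M) (hz : z ^ M = 1) :
    z = PowerSeries.C (PowerSeries.constantCoeff z) := by
  have hz0 : z ≠ 0 := by
    intro h; rw [h, zero_pow hM.ne'] at hz; exact zero_ne_one hz
  have hd : (PowerSeries.derivative k) z = 0 := by
    have h1 : (PowerSeries.derivative k) (z ^ M) = 0 := by rw [hz]; simp
    rw [Derivation.leibniz_pow] at h1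
    have h2 : z ^ (M - 1) • (PowerSeries.derivative k) z = 0 := by
      rw [nsmul_eq_mul] at h1
      rcases mul_eq_zero.mp h1 with h | h
      · exact absurd h (fun h' => hM.ne' (by simpa using congrArg PowerSeries.constantCoeff h'))
      · exact h
    have h3 : z ^ (M - 1) * (PowerSeries.derivative k) z = 0 := h2
    rcases mul_eq_zero.mp h3 with h | h
    · exact absurd h (pow_ne_zero _ hz0)
    · exact h
  ext n
  cases n with
  | zero => simp [PowerSeries.coeff_zero_eq_constantCoeff]
  | succ n =>
      have := congrArg (PowerSeries.coeff n) hd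
      rw [PowerSeries.coeff_derivative] at this
      simp only [map_zero] at this
      have hn1 : ((n : k) + 1) ≠ 0 := Nat.cast_add_one_ne_zero n
      have : PowerSeries.coeff (n + 1) z = 0 := by
        rcases mul_eq_zero.mp this with h | h
        · exact h
        · exact absurd h hn1
      simp [this, PowerSeries.coeff_C]

end Aux

/-- If `gcd(M, {j : b_j ≠ 0}) = 1`, then a series `ω` of positive order is uniquely
determined by the pair `(ω^M, B(ω))`. -/
theorem parametrization_unique
    (k : Type*) [Field k] [CharZero k]
    (M : ℕ) (hM : 0 < M) (B : PowerSeries k)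
    (hgcd : ∀ d : ℕ, d ∣ M → (∀ j : ℕ, PowerSeries.coeff j B ≠ 0 → d ∣ j) → d = 1)
    (ω ω' : PowerSeries k) (hω : ω ≠ 0) (hω' : ω' ≠ 0)
    (h1 : 1 ≤ ω.order) (h1' : 1 ≤ ω'.order)
    (hpow : ω ^ M = ω' ^ M)
    (hsub : PowerSeries.substAt ω B = PowerSeries.substAt ω' B) :
    ω = ω' := by
  classical
  have hfin : ω.order < ⊤ := PowerSeries.order_finite_iff_ne_zero.mpr hω
  have hfin' : ω'.order < ⊤ := PowerSeries.order_finite_iff_ne_zero.mpr hω'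
  set e : ℕ := ω.order.lift hfin with hedef
  set e' : ℕ := ω'.order.lift hfin' with he'def
  have he : ω.order = (e : ℕ∞) := (ENat.coe_lift _ _).symm
  have he' : ω'.order = (e' : ℕ∞) := (ENat.coe_lift _ _).symm
  -- orders are equal
  have heq : e = e' := by
    have h2 : (ω ^ M).order = (ω' ^ M).order := by rw [hpow]
    rw [my_order_pow, my_order_pow, he, he'] at h2
    have h3 : ((M * e : ℕ) : ℕ∞) = ((M * e' : ℕ) : ℕ∞) := by push_cast; exact h2
    exact Nat.eq_of_mul_eq_mul_left hM (by exact_mod_cast h3)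
  -- factor out X^e
  set u : PowerSeries k := PowerSeries.divXPowOrder ω with hudef
  set u' : PowerSeries k := PowerSeries.divXPowOrder ω' with hu'def
  have huX : (PowerSeries.X : PowerSeries k) ^ e * u = ω := by
    have h := PowerSeries.X_pow_order_mul_divXPowOrder (f := ω)
    rwa [he, ENat.toNat_coe] at h
  have huX' : (PowerSeries.X : PowerSeries k) ^ e * u' = ω' := by
    rw [heq]; have h := PowerSeries.X_pow_order_mul_divXPowOrder (f := ω')
    rwa [he', ENat.toNat_coe] at h
  have hXM : ((PowerSeries.X : PowerSeries k) ^ e) ^ M ≠ 0 :=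
    pow_ne_zero _ (pow_ne_zero _ PowerSeries.X_ne_zero)
  have huM : u ^ M = u' ^ M := by
    have : ((PowerSeries.X : PowerSeries k) ^ e) ^ M * u ^ M
        = ((PowerSeries.X : PowerSeries k) ^ e) ^ M * u' ^ M := by
      rw [← mul_pow, ← mul_pow, huX, huX', hpow]
    exact mul_left_cancel₀ hXM this
  obtain ⟨U, hU⟩ := PowerSeries.isUnit_divided_by_X_pow_order hω
  set z : PowerSeries k := u' * (↑U⁻¹ : PowerSeries k) with hzdef
  have hz : z ^ M = 1 := by
    rw [hzdef, mul_pow, ← huM, hudef, ← hU, ← mul_pow, Units.mul_inv, one_pow]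
  set c : k := PowerSeries.constantCoeff z with hcdef
  have hzc : z = PowerSeries.C c := my_root_const hM hz
  have hu' : u' = PowerSeries.C c * u := by
    calc u' = u' * ((↑U⁻¹ : PowerSeries k) * ↑U) := by rw [Units.inv_mul, mul_one]
      _ = z * u := by rw [← mul_assoc, ← hzdef, hU]
      _ = PowerSeries.C c * u := by rw [hzc]
  have hωω' : ω' = PowerSeries.C c * ω := by
    rw [← huX', hu', ← huX]; ring
  have hcM : c ^ M = 1 := by
    have := congrArg (PowerSeries.constantCoeff) hz
    rwa [map_pow, map_one, ← hcdef] at this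
  -- the substitution equality forces c^j = 1 on the support of B
  have hkey : ∀ n, ∑ j ∈ Finset.range (n + 1),
      (PowerSeries.coeff j B * (1 - c ^ j)) * PowerSeries.coeff n (ω ^ j) = 0 := by
    intro n
    have h := congrArg (PowerSeries.coeff n) hsub
    simp only [PowerSeries.substAt, PowerSeries.coeff_mk] at h
    have h2 : ∑ j ∈ Finset.range (n + 1),
        PowerSeries.coeff j B * PowerSeries.coeff n (ω' ^ j)
        = ∑ j ∈ Finset.range (n + 1),
          PowerSeries.coeff j B * (c ^ j * PowerSeries.coeff n (ω ^ j)) := by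
      refine Finset.sum_congr rfl fun j _ => ?_
      rw [hωω', mul_pow, ← map_pow, PowerSeries.coeff_C_mul]
    rw [h2] at h
    have h3 : ∑ j ∈ Finset.range (n + 1),
        (PowerSeries.coeff j B * (1 - c ^ j)) * PowerSeries.coeff n (ω ^ j)
        = ∑ j ∈ Finset.range (n + 1),
          (PowerSeries.coeff j B * PowerSeries.coeff n (ω ^ j)
            - PowerSeries.coeff j B * (c ^ j * PowerSeries.coeff n (ω ^ j))) := by
      refine Finset.sum_congr rfl fun j _ => ?_
      ring
    rw [h3, Finset.sum_sub_distrib, h, sub_self]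
  have hvanish := my_support_zero ω hω h1 _ hkey
  have hcj : ∀ j : ℕ, PowerSeries.coeff j B ≠ 0 → c ^ j = 1 := by
    intro j hj
    have := hvanish j
    rcases mul_eq_zero.mp this with h | h
    · exact absurd h hj
    · linear_combination -h
  -- conclude c = 1 via the gcd hypothesis
  have hd1 : orderOf c = 1 := by
    refine hgcd _ (orderOf_dvd_of_pow_eq_one hcM) fun j hj =>
      orderOf_dvd_of_pow_eq_one (hcj j hj)
  have hc1 : c = 1 := orderOf_eq_one_iff.mp hd1
  rw [hωω', hc1, map_one, one_mul]
end
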